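/- With notation as in the k = 2 maximum-nonclassicality bound, Σ_{i,j} |⟨f_j|a_i⟩||⟨a_i|ψ⟩||⟨ψ|f_j⟩| = √d holds if and only if |⟨f_j|a_i⟩| = 1/√d for all i, j (the bases are mutually unbiased) and |⟨a_i|ψ⟩| = |⟨f_j|ψ⟩| = 1/√d for all i, j. -/

import Mathlib

open scoped InnerProductSpace BigOperators

local notation "⟪" x ", " y "⟫" => @inner ℂ _ _ x y

private theorem sumsq_aux (d : ℕ) (b : OrthonormalBasis (Fin d) ℂ (EuclideanSpace ℂ (Fin d)))
    (v : EuclideanSpace ℂ (Fin d)) : ∑ i, ‖⟪b i, v⟫‖^2 = ‖v‖^2 := by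
  have h := congrArg Complex.re (b.sum_inner_mul_inner v v)
  rw [Complex.re_sum] at h
  have hterm : ∀ i, (⟪v, b i⟫ * ⟪b i, v⟫).re = ‖⟪b i, v⟫‖^2 := by
    intro i
    rw [show ⟪v, b i⟫ = (starRingEnd ℂ) ⟪b i, v⟫ from (inner_conj_symm v (b i)).symm,
      RCLike.conj_mul]
    norm_cast
  rw [Finset.sum_congr rfl (fun i _ => hterm i)] at h
  rw [h]
  simpa using inner_self_eq_norm_sq (𝕜 := ℂ) v

theorem stmt11 (d : ℕ) (hd : 0 < d)
    (a f : OrthonormalBasis (Fin d) ℂ (EuclideanSpace ℂ (Fin d)))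
    (ψ : EuclideanSpace ℂ (Fin d)) (hψ : ‖ψ‖ = 1) :
    (∑ i, ∑ j, ‖⟪f j, a i⟫‖ * ‖⟪a i, ψ⟫‖ * ‖⟪ψ, f j⟫‖) = Real.sqrt d ↔
      (∀ i j, ‖⟪f j, a i⟫‖ = 1 / Real.sqrt d) ∧
        (∀ i, ‖⟪a i, ψ⟫‖ = 1 / Real.sqrt d) ∧
        (∀ j, ‖⟪f j, ψ⟫‖ = 1 / Real.sqrt d) := by
  set s := Real.sqrt d with hs_def
  have hdR : (0:ℝ) < d := by exact_mod_cast hd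
  have hs : 0 < s := Real.sqrt_pos.mpr hdR
  have hs2 : s ^ 2 = d := Real.sq_sqrt hdR.le
  set M : Fin d → Fin d → ℝ := fun i j => ‖⟪f j, a i⟫‖ with hM_def
  set X : Fin d → ℝ := fun i => ‖⟪a i, ψ⟫‖ with hX_def
  set Y : Fin d → ℝ := fun j => ‖⟪ψ, f j⟫‖ with hY_def
  have hYsymm : ∀ j, ‖⟪f j, ψ⟫‖ = Y j := fun j => norm_inner_symm (f j) ψ
  have h1 : ∑ i, X i ^ 2 = 1 := by
    have := sumsq_aux d a ψ; rw [hψ] at this; simpa using this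
  have h2 : ∑ j, Y j ^ 2 = 1 := by
    have := sumsq_aux d f ψ; rw [hψ] at this
    simpa [← hYsymm] using this
  have h3 : ∀ i, ∑ j, M i j ^ 2 = 1 := by
    intro i
    have := sumsq_aux d f (a i)
    rw [a.orthonormal.1 i] at this; simpa using this
  have h4 : ∀ j, ∑ i, M i j ^ 2 = 1 := by
    intro j
    have := sumsq_aux d a (f j)
    rw [f.orthonormal.1 j] at this
    have hsym : ∀ i, ‖⟪a i, f j⟫‖ = M i j := fun i => norm_inner_symm (a i) (f j)
    rw [Finset.sum_congr rfl (fun i _ => by rw [hsym i])] at this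
    simpa using this
  have hXnn : ∀ i, 0 ≤ X i := fun i => norm_nonneg _
  have hYnn : ∀ j, 0 ≤ Y j := fun j => norm_nonneg _
  have hMnn : ∀ i j, 0 ≤ M i j := fun i j => norm_nonneg _
  constructor
  · intro hE
    have hMsum : ∑ i, ∑ j, M i j ^ 2 = d := by
      rw [Finset.sum_congr rfl (fun i _ => h3 i)]; simp
    have hXYsum : ∑ i, ∑ j, X i ^ 2 * Y j ^ 2 = 1 := by
      rw [← Finset.sum_mul_sum]
      rw [h1, h2]; ring
    have hzero : ∑ i, ∑ j, (M i j - s * X i * Y j) ^ 2 = 0 := by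
      have expand : ∑ i, ∑ j, (M i j - s * X i * Y j) ^ 2
          = (∑ i, ∑ j, M i j ^ 2) - 2 * s * (∑ i, ∑ j, M i j * X i * Y j)
            + s ^ 2 * (∑ i, ∑ j, X i ^ 2 * Y j ^ 2) := by
        simp only [Finset.mul_sum, ← Finset.sum_sub_distrib, ← Finset.sum_add_distrib]
        refine Finset.sum_congr rfl fun i _ => Finset.sum_congr rfl fun j _ => ?_
        ring
      rw [expand, hMsum, hXYsum, hE]
      nlinarith [hs2]
    have key : ∀ i ∈ Finset.univ, ∀ j ∈ (Finset.univ : Finset (Fin d)),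
        (M i j - s * X i * Y j) ^ 2 = 0 := by
      have h0 := (Finset.sum_eq_zero_iff_of_nonneg
        (fun i _ => Finset.sum_nonneg fun j _ => sq_nonneg _)).mp hzero
      intro i hi j hj
      exact (Finset.sum_eq_zero_iff_of_nonneg (fun j _ => sq_nonneg _)).mp (h0 i hi) j hj
    have keyM : ∀ i j, M i j = s * X i * Y j := by
      intro i j
      have := key i (Finset.mem_univ i) j (Finset.mem_univ j)
      have := pow_eq_zero_iff (n := 2) (by norm_num) |>.mp this
      linarith
    have hX : ∀ i, X i = 1 / s := by
      intro i
      have h3i := h3 i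
      rw [Finset.sum_congr rfl (fun j _ => by rw [keyM i j])] at h3i
      have : ∑ j, (s * X i * Y j) ^ 2 = s ^ 2 * X i ^ 2 * ∑ j, Y j ^ 2 := by
        rw [Finset.mul_sum]; exact Finset.sum_congr rfl fun j _ => by ring
      rw [this, h2, mul_one, hs2] at h3i
      have hXsq : X i ^ 2 = (1 / s) ^ 2 := by
        field_simp [hs2]
        linear_combination h3i + X i ^ 2 * hs2
      have := congrArg Real.sqrt hXsq
      rwa [Real.sqrt_sq (hXnn i), Real.sqrt_sq (by positivity)] at this
    have hY : ∀ j, Y j = 1 / s := by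
      intro j
      have h4j := h4 j
      rw [Finset.sum_congr rfl (fun i _ => by rw [keyM i j])] at h4j
      have : ∑ i, (s * X i * Y j) ^ 2 = s ^ 2 * Y j ^ 2 * ∑ i, X i ^ 2 := by
        rw [Finset.mul_sum]; exact Finset.sum_congr rfl fun i _ => by ring
      rw [this, h1, mul_one, hs2] at h4j
      have hYsq : Y j ^ 2 = (1 / s) ^ 2 := by
        field_simp [hs2]
        linear_combination h4j + Y j ^ 2 * hs2
      have := congrArg Real.sqrt hYsq
      rwa [Real.sqrt_sq (hYnn j), Real.sqrt_sq (by positivity)] at this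
    refine ⟨fun i j => ?_, hX, fun j => ?_⟩
    · rw [show ‖⟪f j, a i⟫‖ = M i j from rfl, keyM i j, hX i, hY j]
      field_simp
    · rw [hYsymm j, hY j]
  · rintro ⟨hM, hX, hY⟩
    have hterm : ∀ i j, ‖⟪f j, a i⟫‖ * ‖⟪a i, ψ⟫‖ * ‖⟪ψ, f j⟫‖ = (1/s) * (1/s) * (1/s) := by
      intro i j
      rw [hM i j, hX i, norm_inner_symm ψ (f j)]
      rw [hY j]
    rw [Finset.sum_congr rfl fun i _ => Finset.sum_congr rfl fun j _ => hterm i j]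
    simp only [Finset.sum_const, Finset.card_univ, Fintype.card_fin, nsmul_eq_mul]
    have : (d:ℝ) * ((d:ℝ) * (1/s * (1/s) * (1/s))) = (d:ℝ)^2 / s^3 := by ring
    rw [this]
    have hd2 : (d:ℝ)^2 = s^4 := by rw [← hs2]; ring
    rw [hd2]
    field_simp
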